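/- For every odd integer n ≥ 3, the sum over all permutations σ of [n] of (-1) raised to the number of inversions of σ of distance at most 3 equals 0. Equivalently, for odd n, the number of permutations of [n] with an even number of such inversions equals the number with an odd number. (Hence for odd n this statistic exhibits the cyclic sieving phenomenon with respect to fixed-point-free involutions on S_n.) -/

import Mathlib

open Finset

/-- The set of pairs of positions at distance at most 3. -/
private def Dset (n : ℕ) : Finset (Fin n × Fin n) :=
  univ.filter (fun p : Fin n × Fin n => p.1 < p.2 ∧ (p.2 : ℕ) ≤ (p.1 : ℕ) + 3)

private lemma card_Dset (n : ℕ) (hn : 3 ≤ n) : (Dset n).card = 3 * n - 6 := by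
  classical
  have ht : ((range 3).biUnion
      (fun d => (range (n - 1 - d)).image (fun i => (i, d)))).card = 3 * n - 6 := by
    rw [Finset.card_biUnion]
    · have h1 : ∀ d, ((range (n - 1 - d)).image (fun i => (i, d))).card = n - 1 - d := by
        intro d
        rw [Finset.card_image_of_injective _ (fun a b hab => (Prod.mk.injEq _ _ _ _ ▸ hab).1),
          Finset.card_range]
      rw [show (3 : ℕ) = 2 + 1 from rfl, Finset.sum_range_succ, Finset.sum_range_succ,
        Finset.sum_range_succ, Finset.sum_range_zero, h1, h1, h1]
      omega
    · intro a _ b _ hab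
      simp only [Finset.disjoint_left, Finset.mem_image, Finset.mem_range]
      rintro ⟨x, y⟩ ⟨i, _, hi⟩ ⟨j, _, hj⟩
      apply hab
      simpa using congrArg Prod.snd (hi.trans hj.symm)
  rw [← ht]
  refine Finset.card_bij' (fun (p : Fin n × Fin n) (_ : p ∈ Dset n) => ((p.1 : ℕ), (p.2 : ℕ) - (p.1 : ℕ) - 1))
    (fun q hq =>
      (⟨q.1, by
        simp only [Finset.mem_biUnion, Finset.mem_image, Finset.mem_range] at hq
        obtain ⟨d, hd, i, hi, h⟩ := hq
        have : q.1 = i := (Prod.mk.injEq _ _ _ _ ▸ h.symm).1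
        omega⟩,
       ⟨q.1 + q.2 + 1, by
        simp only [Finset.mem_biUnion, Finset.mem_image, Finset.mem_range] at hq
        obtain ⟨d, hd, i, hi, h⟩ := hq
        have h1 : q.1 = i := (Prod.mk.injEq _ _ _ _ ▸ h.symm).1
        have h2 : q.2 = d := (Prod.mk.injEq _ _ _ _ ▸ h.symm).2
        omega⟩)) ?_ ?_ ?_ ?_
  · intro p hp
    simp only [Dset, Finset.mem_filter, Finset.mem_univ, true_and, Fin.lt_def] at hp
    have h1 := p.1.isLt
    have h2 := p.2.isLt
    simp only [Finset.mem_biUnion, Finset.mem_image, Finset.mem_range]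
    exact ⟨(p.2 : ℕ) - (p.1 : ℕ) - 1, by omega, (p.1 : ℕ), by omega, rfl⟩
  · intro q hq
    simp only [Finset.mem_biUnion, Finset.mem_image, Finset.mem_range] at hq
    obtain ⟨d, hd, i, hi, h⟩ := hq
    have h1 : q.1 = i := (Prod.mk.injEq _ _ _ _ ▸ h.symm).1
    have h2 : q.2 = d := (Prod.mk.injEq _ _ _ _ ▸ h.symm).2
    simp only [Dset, Finset.mem_filter, Finset.mem_univ, true_and, Fin.lt_def]
    refine ⟨?_, ?_⟩
    · show q.1 < q.1 + q.2 + 1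
      omega
    · show q.1 + q.2 + 1 ≤ q.1 + 3
      omega
  · intro p hp
    simp only [Dset, Finset.mem_filter, Finset.mem_univ, true_and, Fin.lt_def] at hp
    obtain ⟨h1, h2⟩ := hp
    refine Prod.ext (Fin.ext rfl) (Fin.ext ?_)
    show (p.1 : ℕ) + ((p.2 : ℕ) - (p.1 : ℕ) - 1) + 1 = (p.2 : ℕ)
    omega
  · intro q hq
    simp only [Finset.mem_biUnion, Finset.mem_image, Finset.mem_range] at hq
    obtain ⟨d, hd, i, hi, h⟩ := hq
    have h1 : q.1 = i := (Prod.mk.injEq _ _ _ _ ▸ h.symm).1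
    have h2 : q.2 = d := (Prod.mk.injEq _ _ _ _ ▸ h.symm).2
    refine Prod.ext rfl ?_
    show q.1 + q.2 + 1 - q.1 - 1 = q.2
    omega

/-- The inversion set of distance at most 3. -/
private def Aset {n : ℕ} (σ : Equiv.Perm (Fin n)) : Finset (Fin n × Fin n) :=
  univ.filter (fun p : Fin n × Fin n =>
    p.1 < p.2 ∧ (p.2 : ℕ) ≤ (p.1 : ℕ) + 3 ∧ σ p.2 < σ p.1)

private lemma Aset_subset {n : ℕ} (σ : Equiv.Perm (Fin n)) : Aset σ ⊆ Dset n := by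
  intro p hp
  simp only [Aset, Dset, Finset.mem_filter, Finset.mem_univ, true_and] at hp ⊢
  exact ⟨hp.1, hp.2.1⟩

private lemma card_Aset_rev {n : ℕ} (σ : Equiv.Perm (Fin n)) :
    (Aset (σ * Fin.revPerm)).card = (Dset n \ Aset σ).card := by
  classical
  apply Finset.card_nbij' (i := fun p => (p.2.rev, p.1.rev)) (j := fun p => (p.2.rev, p.1.rev))
  · intro p hp
    simp only [Finset.mem_coe, Aset, Finset.mem_filter, Finset.mem_univ, true_and,
      Equiv.Perm.mul_apply, Fin.revPerm_apply] at hp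
    obtain ⟨h1, h2, h3⟩ := hp
    have hv1 := p.1.isLt
    have hv2 := p.2.isLt
    have hlt : p.1 < p.2 := h1
    simp only [Finset.mem_coe, Finset.mem_sdiff, Dset, Aset, Finset.mem_filter, Finset.mem_univ, true_and]
    refine ⟨⟨?_, ?_⟩, ?_⟩
    · exact Fin.rev_lt_rev.mpr h1
    · simp only [Fin.val_rev]
      have := Fin.lt_def.mp hlt
      omega
    · intro ⟨_, _, hc⟩
      exact absurd hc (not_lt.mpr (le_of_lt h3))
  · intro q hq
    simp only [Finset.mem_coe, Finset.mem_sdiff, Dset, Aset, Finset.mem_filter, Finset.mem_univ, true_and,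
      not_and] at hq
    obtain ⟨⟨h1, h2⟩, h3⟩ := hq
    have h4 : ¬ σ q.2 < σ q.1 := h3 h1 h2
    have h5 : σ q.1 < σ q.2 := by
      rcases lt_or_eq_of_le (not_lt.mp h4) with h | h
      · exact h
      · exact absurd (σ.injective h) (Fin.ne_of_lt h1)
    simp only [Finset.mem_coe, Aset, Finset.mem_filter, Finset.mem_univ, true_and,
      Equiv.Perm.mul_apply, Fin.revPerm_apply, Fin.rev_rev]
    refine ⟨Fin.rev_lt_rev.mpr h1, ?_, h5⟩
    simp only [Fin.val_rev]
    have := Fin.lt_def.mp h1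
    have hv2 := q.2.isLt
    omega
  · intro p _; ext <;> simp [Fin.rev_rev]
  · intro q _; ext <;> simp [Fin.rev_rev]

private lemma card_Aset_add {n : ℕ} (hn : 3 ≤ n) (σ : Equiv.Perm (Fin n)) :
    (Aset σ).card + (Aset (σ * Fin.revPerm)).card = 3 * n - 6 := by
  rw [card_Aset_rev, Finset.card_sdiff_of_subset (Aset_subset σ), ← card_Dset n hn]
  have := Finset.card_le_card (Aset_subset σ)
  omega

/-- For odd `n ≥ 3`, the sum over `S_n` of `(-1)` raised to the number of
inversions of distance at most 3 equals `0`. -/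
theorem inversions_distance_three_q_eq_neg_one (n : ℕ) (hn : 3 ≤ n)
    (hodd : Odd n) :
    ∑ σ : Equiv.Perm (Fin n),
      (-1 : ℤ) ^ (univ.filter (fun p : Fin n × Fin n =>
        p.1 < p.2 ∧ (p.2 : ℕ) ≤ (p.1 : ℕ) + 3 ∧ σ p.2 < σ p.1)).card
      = 0 := by
  classical
  have key : ∀ σ : Equiv.Perm (Fin n), (Aset σ).card + (Aset (σ * Fin.revPerm)).card = 3 * n - 6 :=
    card_Aset_add hn
  have hoddD : Odd (3 * n - 6) := by
    obtain ⟨k, hk⟩ := hodd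
    exact ⟨3 * k - 2, by omega⟩
  show ∑ σ : Equiv.Perm (Fin n), (-1 : ℤ) ^ (Aset σ).card = 0
  apply Finset.sum_ninvolution (g := fun σ => σ * Fin.revPerm)
  · intro σ
    have hab : Odd ((Aset σ).card + (Aset (σ * Fin.revPerm)).card) := key σ ▸ hoddD
    rcases Nat.even_or_odd (Aset σ).card with ha | ha
    · have hb : Odd (Aset (σ * Fin.revPerm)).card := by
        obtain ⟨x, hx⟩ := ha; obtain ⟨y, hy⟩ := hab
        exact ⟨y - x, by omega⟩
      rw [ha.neg_one_pow, hb.neg_one_pow]; ring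
    · have hb : Even (Aset (σ * Fin.revPerm)).card := by
        obtain ⟨x, hx⟩ := ha; obtain ⟨y, hy⟩ := hab
        exact ⟨y - x, by omega⟩
      rw [ha.neg_one_pow, hb.neg_one_pow]; ring
  · intro σ _ h
    apply_fun (fun τ => τ ⟨0, by omega⟩) at h
    simp only [Equiv.Perm.mul_apply, Fin.revPerm_apply] at h
    have := σ.injective h
    have h0 : ((Fin.rev (⟨0, by omega⟩ : Fin n)) : ℕ) = 0 := by rw [this]
    simp only [Fin.val_rev] at h0
    omega
  · intro σ; exact Finset.mem_univ _
  · intro σ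
    ext x
    simp [Equiv.Perm.mul_apply, Fin.rev_rev]
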